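/- Let G be a connected graph with maximum degree at most Δ and treelength at most k, and let A ⊆ V(G) be such that G[A] is connected with |A| = n_A ≥ 2. Define, for a vertex v ∈ V(G), the betweenness p_v(A) as the fraction of unordered pairs {a,b} ⊆ A such that v lies on some shortest path in G between a and b. Then there exists a vertex v at distance at most k from A with p_v(A) ≥ 1/(2(Δ^k + 1)). -/

import Mathlib

open SimpleGraph

/-- A tree `Tr` together with bags `B` forming a tree decomposition of `G`. -/
structure IsTreeDecomp {V T : Type} (G : SimpleGraph V) (Tr : SimpleGraph T)
    (B : T → Set V) : Prop where
  tree_connected : Tr.Connected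
  tree_acyclic : Tr.IsAcyclic
  bags_cover : ∀ v : V, ∃ t, v ∈ B t
  bags_subtree : ∀ v : V, (Tr.induce {t | v ∈ B t}).Connected
  edges_in_bag : ∀ u v : V, G.Adj u v → ∃ t, u ∈ B t ∧ v ∈ B t

/-- `G` has treelength at most `k`: some tree decomposition in which any two
vertices sharing a bag are at graph distance at most `k`. -/
def TreelengthLE {V : Type} (G : SimpleGraph V) (k : ℕ) : Prop :=
  ∃ (T : Type) (Tr : SimpleGraph T) (B : T → Set V),
    IsTreeDecomp G Tr B ∧ ∀ t : T, ∀ u ∈ B t, ∀ v ∈ B t, G.edist u v ≤ k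


/-- Betweenness of `z` with respect to `A`: the fraction of (ordered) pairs of
distinct vertices of `A` such that `z` lies on some shortest path between them. -/
noncomputable def btw {V : Type} (G : SimpleGraph V) (A : Set V) (z : V) : ℝ :=
  ({p : V × V | p.1 ∈ A ∧ p.2 ∈ A ∧ p.1 ≠ p.2 ∧
      G.edist p.1 z + G.edist z p.2 = G.edist p.1 p.2}.ncard : ℝ) /
  ({p : V × V | p.1 ∈ A ∧ p.2 ∈ A ∧ p.1 ≠ p.2}.ncard : ℝ)

def Avoid {T : Type} (Tr : SimpleGraph T) (t x y : T) : Prop :=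
  ∃ w : Tr.Walk x y, t ∉ w.support

section Decomp
variable {V T : Type} {G : SimpleGraph V} {Tr : SimpleGraph T} {B : T → Set V}

lemma Avoid.refl' {Tr : SimpleGraph T} {t x : T} (h : x ≠ t) : Avoid Tr t x x :=
  ⟨SimpleGraph.Walk.nil, by simpa using h.symm⟩

lemma same_bag_avoid (hd : IsTreeDecomp G Tr B) {tstar : T} {u : V} (hu : u ∉ B tstar)
    {t t' : T} (ht : u ∈ B t) (ht' : u ∈ B t') : Avoid Tr tstar t t' := by
  obtain ⟨w⟩ := (hd.bags_subtree u) ⟨t, ht⟩ ⟨t', ht'⟩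
  refine ⟨w.map (SimpleGraph.Embedding.induce {s | u ∈ B s}).toHom, ?_⟩
  intro hmem
  replace hmem : tstar ∈ w.support.map (SimpleGraph.Embedding.induce (G := Tr) {s | u ∈ B s}).toHom := by
    rw [← SimpleGraph.Walk.support_map]; exact hmem
  rw [List.mem_map] at hmem
  obtain ⟨⟨s, hs⟩, _, hEq⟩ := hmem
  apply hu
  have : s = tstar := hEq
  rwa [this] at hs

lemma walk_avoid (hd : IsTreeDecomp G Tr B) (tstar : T) (φ : V → T) (hφ : ∀ v, v ∈ B (φ v))
    {a b : V} (w : G.Walk a b) (hw : ∀ x ∈ w.support, x ∉ B tstar) :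
    Avoid Tr tstar (φ a) (φ b) := by
  induction w with
  | nil =>
    refine Avoid.refl' ?_
    intro hc
    exact hw _ (SimpleGraph.Walk.start_mem_support _) (hc ▸ hφ _)
  | @cons a c b hadj p ih =>
    have ha : a ∉ B tstar := hw _ (SimpleGraph.Walk.start_mem_support _)
    have hc : c ∉ B tstar := by
      apply hw
      simp [SimpleGraph.Walk.support_cons]
    obtain ⟨t, hat, hct⟩ := hd.edges_in_bag a c hadj
    have h1 : Avoid Tr tstar (φ a) t := same_bag_avoid hd ha (hφ a) hat
    have h2 : Avoid Tr tstar t (φ c) := same_bag_avoid hd hc hct (hφ c)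
    have h3 : Avoid Tr tstar (φ c) (φ b) := by
      apply ih
      intro x hx
      apply hw
      simp [SimpleGraph.Walk.support_cons, hx]
    obtain ⟨w1, hw1⟩ := h1
    obtain ⟨w2, hw2⟩ := h2
    obtain ⟨w3, hw3⟩ := h3
    refine ⟨(w1.append w2).append w3, ?_⟩
    simp only [SimpleGraph.Walk.mem_support_append_iff]
    tauto

lemma between_of_support (hG : G.Connected) {a b x : V} (w : G.Walk a b)
    (hw : w.length = G.dist a b) (hx : x ∈ w.support) :
    G.dist a x + G.dist x b = G.dist a b := by
  classical
  have h1 : G.dist a x ≤ (w.takeUntil x hx).length := SimpleGraph.dist_le _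
  have h2 : G.dist x b ≤ (w.dropUntil x hx).length := SimpleGraph.dist_le _
  have h3 : (w.takeUntil x hx).length + (w.dropUntil x hx).length = w.length := by
    rw [← SimpleGraph.Walk.length_append, SimpleGraph.Walk.take_spec]
  have h4 := hG.dist_triangle (u := a) (v := x) (w := b)
  omega

lemma edist_cast (hr : G.Reachable u v) : G.edist u v = (G.dist u v : ℕ∞) :=
  (ENat.coe_toNat (SimpleGraph.edist_ne_top_iff_reachable.mpr hr)).symm

namespace Avoid

variable {Tr : SimpleGraph T} {t x y z : T}

lemma ne_left (h : Avoid Tr t x y) : x ≠ t := by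
  obtain ⟨w, hw⟩ := h
  rintro rfl; exact hw w.start_mem_support

lemma ne_right (h : Avoid Tr t x y) : y ≠ t := by
  obtain ⟨w, hw⟩ := h
  rintro rfl; exact hw w.end_mem_support

protected lemma refl (h : x ≠ t) : Avoid Tr t x x :=
  ⟨Walk.nil, by simpa using h.symm⟩

protected lemma symm (h : Avoid Tr t x y) : Avoid Tr t y x := by
  obtain ⟨w, hw⟩ := h
  exact ⟨w.reverse, by simpa using hw⟩

protected lemma trans (h : Avoid Tr t x y) (h' : Avoid Tr t y z) : Avoid Tr t x z := by
  obtain ⟨w, hw⟩ := h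
  obtain ⟨w', hw'⟩ := h'
  refine ⟨w.append w', ?_⟩
  rw [Walk.mem_support_append_iff]
  tauto

end Avoid

/-- Key tree fact: if `t ~ u` and `s` is reachable from `u` avoiding `t`,
then `u` is strictly closer to `s` than `t` is. -/
lemma tree_dist_lt (hc : Tr.Connected) (ha : Tr.IsAcyclic) {t u s : T}
    (htu : Tr.Adj t u) (hav : Avoid Tr t u s) :
    Tr.dist u s + 1 ≤ Tr.dist t s := by
  classical
  have hst : s ≠ t := hav.ne_right
  obtain ⟨p, hp, hlen⟩ := hc.exists_path_of_dist t s
  cases p with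
  | nil => exact absurd rfl hst.symm
  | @cons _ u' _ h q =>
    have hq : q.IsPath := hp.of_cons
    have htq : t ∉ q.support := by
      have := hp.support_nodup
      simp only [Walk.support_cons, List.nodup_cons] at this
      exact this.1
    have hlq : q.length = Tr.dist t s - 1 := by
      simp only [Walk.length_cons] at hlen; omega
    have hdts : 1 ≤ Tr.dist t s := by
      simp only [Walk.length_cons] at hlen; omega
    by_cases huu : u' = u
    · subst huu
      have := SimpleGraph.dist_le q
      omega
    · -- u ≠ u', both adjacent to t, connected avoiding t: build a cycle
      exfalso
      have hav' : Avoid Tr t u u' := hav.trans (Avoid.symm ⟨q, htq⟩)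
      obtain ⟨w, hw⟩ := hav'
      have hbp : w.bypass.IsPath := w.bypass_isPath
      have hbt : t ∉ w.bypass.support := fun hx => hw (w.support_bypass_subset hx)
      -- build a cycle through t
      have hpath : (Walk.cons htu w.bypass).IsPath := hbp.cons hbt
      have hcyc : (Walk.cons h (Walk.cons htu w.bypass).reverse).IsCycle := by
        rw [Walk.cons_isCycle_iff]
        refine ⟨hpath.reverse, ?_⟩
        rw [Walk.edges_reverse, List.mem_reverse, Walk.edges_cons, List.mem_cons]
        push_neg
        constructor
        · intro hEq
          rw [Sym2.eq, Sym2.rel_iff'] at hEq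
          rcases hEq with h1 | h2
          · have : u' = u := by simpa using congrArg Prod.snd h1
            exact huu this
          · have : u' = t := by simpa using congrArg Prod.snd h2
            exact h.ne' this
        · intro hmem
          exact hbt (Walk.fst_mem_support_of_mem_edges w.bypass hmem)
      exact ha _ hcyc

lemma dist_le_adj_dist {Tr : SimpleGraph T} (hc : Tr.Connected) {t u s : T} (htu : Tr.Adj t u) :
    Tr.dist u s ≤ Tr.dist t s + 1 := by
  have h1 : Tr.dist u t = 1 := by rwa [SimpleGraph.dist_eq_one_iff_adj, adj_comm]
  have := hc.dist_triangle (u := u) (v := t) (w := s)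
  omega

open scoped Classical in
/-- Existence of a centroid: a node `t` of the tree such that each component of
`Tr - t` carries at most half of the weight. -/
lemma exists_centroid {V : Type} {Tr : SimpleGraph T} (hc : Tr.Connected) (ha : Tr.IsAcyclic)
    (Afin : Finset V) (φ : V → T) :
    ∃ t : T, ∀ x : T,
      2 * (Afin.filter (fun a => Avoid Tr t (φ a) x)).card ≤ Afin.card := by
  classical
  obtain ⟨t0⟩ := hc.nonempty
  set n := Afin.card with hn
  have key : ∀ N : ℕ, ∀ t0 : T, (∑ a ∈ Afin, Tr.dist t0 (φ a)) ≤ N →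
      ∃ t : T, ∀ x : T,
        2 * (Afin.filter (fun a => Avoid Tr t (φ a) x)).card ≤ n := by
    intro N
    induction N using Nat.strong_induction_on with
    | _ N ih =>
      intro t hμ
      by_cases hgood : ∀ x : T, 2 * (Afin.filter (fun a => Avoid Tr t (φ a) x)).card ≤ n
      · exact ⟨t, hgood⟩
      · push_neg at hgood
        obtain ⟨x, hx⟩ := hgood
        have hSin : 0 < (Afin.filter (fun a => Avoid Tr t (φ a) x)).card := by omega
        obtain ⟨a0, ha0⟩ := Finset.card_pos.mp hSin
        have hxt : x ≠ t := ((Finset.mem_filter.mp ha0).2).ne_right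
        obtain ⟨p, hp, hlen⟩ := hc.exists_path_of_dist t x
        cases p with
        | nil => exact absurd rfl hxt.symm
        | @cons _ u _ h q =>
          have htq : t ∉ q.support := by
            have := hp.support_nodup
            simp only [Walk.support_cons, List.nodup_cons] at this
            exact this.1
          have havux : Avoid Tr t u x := ⟨q, htq⟩
          set P := fun a => Avoid Tr t (φ a) x with hP
          set Sin := Afin.filter P with hSin'
          set Sout := Afin.filter (fun a => ¬ P a) with hSout'
          have hin : ∀ a ∈ Sin, Tr.dist u (φ a) + 1 ≤ Tr.dist t (φ a) := by
            intro a haa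
            have hax : Avoid Tr t (φ a) x := (Finset.mem_filter.mp haa).2
            exact tree_dist_lt hc ha h (havux.trans hax.symm)
          have hout : ∀ a ∈ Sout, Tr.dist u (φ a) ≤ Tr.dist t (φ a) + 1 := by
            intro a _
            exact dist_le_adj_dist hc h
          have hsum1 : (∑ a ∈ Sin, Tr.dist u (φ a)) + Sin.card ≤ ∑ a ∈ Sin, Tr.dist t (φ a) := by
            calc (∑ a ∈ Sin, Tr.dist u (φ a)) + Sin.card
                = ∑ a ∈ Sin, (Tr.dist u (φ a) + 1) := by
                  rw [Finset.sum_add_distrib, Finset.sum_const, smul_eq_mul, mul_one]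
              _ ≤ ∑ a ∈ Sin, Tr.dist t (φ a) := Finset.sum_le_sum hin
          have hsum2 : (∑ a ∈ Sout, Tr.dist u (φ a)) ≤
              (∑ a ∈ Sout, Tr.dist t (φ a)) + Sout.card := by
            calc (∑ a ∈ Sout, Tr.dist u (φ a)) ≤ ∑ a ∈ Sout, (Tr.dist t (φ a) + 1) :=
                  Finset.sum_le_sum hout
              _ = (∑ a ∈ Sout, Tr.dist t (φ a)) + Sout.card := by
                  rw [Finset.sum_add_distrib, Finset.sum_const, smul_eq_mul, mul_one]
          have hsplitu : (∑ a ∈ Afin, Tr.dist u (φ a)) =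
              (∑ a ∈ Sin, Tr.dist u (φ a)) + ∑ a ∈ Sout, Tr.dist u (φ a) :=
            (Finset.sum_filter_add_sum_filter_not Afin P _).symm
          have hsplitt : (∑ a ∈ Afin, Tr.dist t (φ a)) =
              (∑ a ∈ Sin, Tr.dist t (φ a)) + ∑ a ∈ Sout, Tr.dist t (φ a) :=
            (Finset.sum_filter_add_sum_filter_not Afin P _).symm
          have hcards : Sin.card + Sout.card = n := Finset.card_filter_add_card_filter_not _
          have hdesc : (∑ a ∈ Afin, Tr.dist u (φ a)) < ∑ a ∈ Afin, Tr.dist t (φ a) := by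
            omega
          exact ih (∑ a ∈ Afin, Tr.dist u (φ a)) (by omega) u le_rfl
  exact key _ t0 le_rfl

section Ball
variable {V : Type} [Fintype V] {G : SimpleGraph V}

lemma exists_pred_of_dist {a0 v : V} {j : ℕ} (hG : G.Connected) (h : G.dist a0 v = j + 1) :
    ∃ u : V, G.Adj u v ∧ G.dist a0 u = j := by
  obtain ⟨p, hlen⟩ := (hG a0 v).exists_walk_length_eq_dist
  cases hrev : p.reverse with
  | nil =>
    have : p.length = 0 := by
      have := congrArg Walk.length hrev
      simpa using this
    omega
  | @cons _ u _ hadj q =>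
    have hql : q.length + 1 = j + 1 := by
      have := congrArg Walk.length hrev
      simp only [Walk.length_reverse, Walk.length_cons] at this
      omega
    have hdu : G.dist a0 u ≤ j := by
      have := SimpleGraph.dist_le q.reverse
      simp only [Walk.length_reverse] at this
      omega
    have hduv : G.dist u v = 1 := by
      rw [SimpleGraph.dist_eq_one_iff_adj]; exact hadj.symm
    have htri := hG.dist_triangle (u := a0) (v := u) (w := v)
    refine ⟨u, hadj.symm, ?_⟩
    omega

open scoped Classical in
lemma ball_card_le [DecidableRel G.Adj] {a0 : V} {Δ k : ℕ} (hG : G.Connected)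
    (hΔ : ∀ v : V, (Finset.univ.filter (fun u => G.Adj v u)).card ≤ Δ) :
    (Finset.univ.filter (fun v => G.dist a0 v ≤ k)).card ≤ Δ ^ k + 1 := by
  classical
  set sph : ℕ → Finset V := fun j => Finset.univ.filter (fun v => G.dist a0 v = j) with hsph
  have hs0 : (sph 0).card = 1 := by
    have : sph 0 = {a0} := by
      ext v
      simp only [hsph, Finset.mem_filter, Finset.mem_univ, true_and, Finset.mem_singleton]
      rw [hG.dist_eq_zero_iff]
      exact eq_comm
    rw [this, Finset.card_singleton]
  have hs1 : (sph 1).card ≤ Δ := by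
    refine le_trans (Finset.card_le_card ?_) (hΔ a0)
    intro v hv
    simp only [hsph, Finset.mem_filter, Finset.mem_univ, true_and] at hv ⊢
    rwa [SimpleGraph.dist_eq_one_iff_adj] at hv
  have hstep : ∀ j : ℕ, 1 ≤ j → (sph (j + 1)).card ≤ (Δ - 1) * (sph j).card := by
    intro j hj
    have hsub : sph (j + 1) ⊆ (sph j).biUnion
        (fun u => Finset.univ.filter (fun v => G.Adj u v ∧ G.dist a0 v = j + 1)) := by
      intro v hv
      simp only [hsph, Finset.mem_filter, Finset.mem_univ, true_and] at hv
      obtain ⟨u, hu, hdu⟩ := exists_pred_of_dist hG hv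
      refine Finset.mem_biUnion.mpr ⟨u, ?_, ?_⟩
      · simp [hsph, hdu]
      · simp [hu, hv]
    refine le_trans (Finset.card_le_card hsub) ?_
    refine le_trans Finset.card_biUnion_le ?_
    rw [mul_comm]
    refine le_trans (Finset.sum_le_card_nsmul _ _ (Δ - 1) ?_) (by simp [smul_eq_mul])
    intro u hu
    simp only [hsph, Finset.mem_filter, Finset.mem_univ, true_and] at hu
    -- u has a predecessor u' at distance j - 1
    obtain ⟨j', rfl⟩ : ∃ j', j = j' + 1 := ⟨j - 1, by omega⟩
    obtain ⟨u', hu', hdu'⟩ := exists_pred_of_dist hG hu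
    have hsub2 : Finset.univ.filter (fun v => G.Adj u v ∧ G.dist a0 v = j' + 1 + 1) ⊆
        (Finset.univ.filter (fun v => G.Adj u v)).erase u' := by
      intro v hv
      simp only [Finset.mem_filter, Finset.mem_univ, true_and] at hv
      refine Finset.mem_erase.mpr ⟨?_, by simp [hv.1]⟩
      rintro rfl
      omega
    refine le_trans (Finset.card_le_card hsub2) ?_
    have hmem : u' ∈ Finset.univ.filter (fun v => G.Adj u v) := by simp [hu'.symm]
    rw [Finset.card_erase_of_mem hmem]
    have := hΔ u
    omega
  have hsb : ∀ j : ℕ, (sph (j + 1)).card ≤ Δ * (Δ - 1) ^ j := by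
    intro j
    induction j with
    | zero => simpa using hs1
    | succ j ih =>
      refine le_trans (hstep (j + 1) (by omega)) ?_
      calc (Δ - 1) * (sph (j + 1)).card ≤ (Δ - 1) * (Δ * (Δ - 1) ^ j) :=
            Nat.mul_le_mul_left _ ih
        _ = Δ * (Δ - 1) ^ (j + 1) := by ring
  -- ball bound
  induction k with
  | zero =>
    have : Finset.univ.filter (fun v => G.dist a0 v ≤ 0) = sph 0 := by
      ext v; simp [hsph, Nat.le_zero]
    rw [this, hs0]; omega
  | succ k ihk =>
    have hsplit : Finset.univ.filter (fun v => G.dist a0 v ≤ k + 1) ⊆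
        (Finset.univ.filter (fun v => G.dist a0 v ≤ k)) ∪ sph (k + 1) := by
      intro v hv
      simp only [hsph, Finset.mem_filter, Finset.mem_union, Finset.mem_univ, true_and] at hv ⊢
      omega
    refine le_trans (Finset.card_le_card hsplit) (le_trans (Finset.card_union_le _ _) ?_)
    rcases Nat.eq_zero_or_pos k with rfl | hk
    · have := hs1
      have h0 : (Finset.univ.filter (fun v => G.dist a0 v ≤ 0)).card = 1 := by
        have hset : Finset.univ.filter (fun v => G.dist a0 v ≤ 0) = sph 0 := by
          ext v; simp [hsph, Nat.le_zero]
        rw [hset, hs0]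
      rw [h0]
      have : (sph 1).card ≤ Δ := hs1
      simpa [pow_one] using by omega
    · have hb := ihk
      have hsk := hsb k
      have hkey : Δ ^ k + Δ * (Δ - 1) ^ k ≤ Δ ^ (k + 1) := by
        rcases Nat.eq_zero_or_pos Δ with rfl | hΔpos
        · simp [Nat.zero_pow hk]
        · obtain ⟨k', rfl⟩ : ∃ k', k = k' + 1 := ⟨k - 1, by omega⟩
          have h1 : (Δ - 1) ^ k' ≤ Δ ^ k' := Nat.pow_le_pow_left (by omega) _
          have h2 : Δ * (Δ - 1) ^ (k' + 1) ≤ Δ ^ (k' + 1) * (Δ - 1) := by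
            calc Δ * (Δ - 1) ^ (k' + 1) = (Δ * (Δ - 1) ^ k') * (Δ - 1) := by ring
              _ ≤ (Δ * Δ ^ k') * (Δ - 1) := by
                  exact Nat.mul_le_mul_right _ (Nat.mul_le_mul_left _ h1)
              _ = Δ ^ (k' + 1) * (Δ - 1) := by ring
          have h3 : Δ ^ (k' + 1) + Δ ^ (k' + 1) * (Δ - 1) = Δ ^ (k' + 2) := by
            have : Δ ^ (k' + 1) * (1 + (Δ - 1)) = Δ ^ (k' + 1) * Δ := by
              congr 1; omega
            calc Δ ^ (k' + 1) + Δ ^ (k' + 1) * (Δ - 1) = Δ ^ (k' + 1) * (1 + (Δ - 1)) := by ring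
              _ = Δ ^ (k' + 1) * Δ := this
              _ = Δ ^ (k' + 2) := by ring
          have h4 : Δ ^ (k' + 2) = Δ ^ (k' + 1 + 1) := by ring
          omega
      omega
  end Ball

end Decomp

theorem stmt2 {V : Type} [Fintype V] (G : SimpleGraph V) [DecidableRel G.Adj]
    (Δ k : ℕ) (hΔ : ∀ v : V, G.degree v ≤ Δ) (hG : G.Connected)
    (htl : TreelengthLE G k) (A : Set V) (hA : (G.induce A).Connected)
    (hA2 : 2 ≤ A.ncard) :
    ∃ v : V, (∃ a ∈ A, G.edist v a ≤ k) ∧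
      btw G A v ≥ 1 / (2 * ((Δ : ℝ) ^ k + 1)) := by
  classical
  obtain ⟨T, Tr, B, hd, hlen⟩ := htl
  choose φ hφ using hd.bags_cover
  set Afin : Finset V := Finset.univ.filter (· ∈ A) with hAfin
  have hmemA : ∀ a : V, a ∈ Afin ↔ a ∈ A := by intro a; simp [hAfin]
  have hAcoe : A = (↑Afin : Set V) := by ext a; simp [hAfin]
  set n := Afin.card with hn
  have hn2 : 2 ≤ n := by rwa [hAcoe, Set.ncard_coe_finset] at hA2
  obtain ⟨tstar, hcent⟩ := exists_centroid hd.tree_connected hd.tree_acyclic Afin φ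
  -- basic facts about between-ness in edist form
  have hbtw_self_left : ∀ a b : V, G.edist a a + G.edist a b = G.edist a b := by
    intro a b; rw [SimpleGraph.edist_self, zero_add]
  have hbtw_self_right : ∀ a b : V, G.edist a b + G.edist b b = G.edist a b := by
    intro a b; rw [SimpleGraph.edist_self, add_zero]
  set PairOK : V × V → Prop := fun p => p.1 ∈ A ∧ p.2 ∈ A ∧ p.1 ≠ p.2 with hPairOK
  set Btw : V → V × V → Prop :=
    fun x p => G.edist p.1 x + G.edist x p.2 = G.edist p.1 p.2 with hBtw
  set allP : Finset (V × V) := Finset.univ.filter PairOK with hallP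
  set goodP : Finset (V × V) :=
    Finset.univ.filter (fun p => PairOK p ∧ ∃ x ∈ B tstar, Btw x p) with hgoodP
  set badP : Finset (V × V) := allP \ goodP with hbadP
  -- key1 : bad pairs avoid the central bag and are Avoid-related
  have key1 : ∀ p ∈ badP, p.1 ∉ B tstar ∧ p.2 ∉ B tstar ∧ Avoid Tr tstar (φ p.1) (φ p.2) := by
    rintro ⟨a, b⟩ hp
    simp only [hbadP, Finset.mem_sdiff, hallP, hgoodP, Finset.mem_filter, Finset.mem_univ,
      true_and, not_and] at hp
    obtain ⟨hok, hng⟩ := hp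
    have hng' : ¬ ∃ x ∈ B tstar, Btw x (a, b) := hng hok
    push_neg at hng'
    have ha : a ∉ B tstar := fun h => hng' a h (hbtw_self_left a b)
    have hb : b ∉ B tstar := fun h => hng' b h (hbtw_self_right a b)
    obtain ⟨w, hwlen⟩ := (hG a b).exists_walk_length_eq_dist
    have hsupp : ∀ x ∈ w.support, x ∉ B tstar := by
      intro x hx hxX
      apply hng' x hxX
      have hb1 := between_of_support hG w hwlen hx
      show G.edist a x + G.edist x b = G.edist a b
      rw [edist_cast (hG a x), edist_cast (hG x b), edist_cast (hG a b),
        ← Nat.cast_add, ← hb1]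
    exact ⟨ha, hb, walk_avoid hd tstar φ hφ w hsupp⟩
  -- key2 : the central bag meets A
  have key2 : ∃ a0 ∈ A, a0 ∈ B tstar := by
    by_contra hcon
    push_neg at hcon
    have hAne : Afin.Nonempty := Finset.card_pos.mp (by omega)
    obtain ⟨a1, ha1⟩ := hAne
    have ha1A : a1 ∈ A := (hmemA a1).mp ha1
    have hφa1 : φ a1 ≠ tstar := by
      intro h
      exact hcon a1 ha1A (h ▸ hφ a1)
    have ha1cls : a1 ∈ Afin.filter (fun a => Avoid Tr tstar (φ a) (φ a1)) :=
      Finset.mem_filter.mpr ⟨ha1, Avoid.refl' hφa1⟩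
    have hclsle := hcent (φ a1)
    have hstrict : (Afin.filter (fun a => Avoid Tr tstar (φ a) (φ a1))).card < Afin.card := by
      omega
    have hns : ¬ (Afin ⊆ Afin.filter (fun a => Avoid Tr tstar (φ a) (φ a1))) := fun hsub =>
      absurd (Finset.card_le_card hsub) (by omega)
    rw [Finset.not_subset] at hns
    obtain ⟨b, hbA, hbn⟩ := hns
    have hbA' : b ∈ A := (hmemA b).mp hbA
    obtain ⟨wA⟩ := hA ⟨b, hbA'⟩ ⟨a1, ha1A⟩
    set wG := wA.map (SimpleGraph.Embedding.induce A).toHom with hwG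
    have hsupp : ∀ x ∈ wG.support, x ∉ B tstar := by
      intro x hx
      rw [hwG, SimpleGraph.Walk.support_map, List.mem_map] at hx
      obtain ⟨⟨s, hs⟩, _, rfl⟩ := hx
      exact hcon s hs
    have := walk_avoid hd tstar φ hφ wG hsupp
    exact hbn (Finset.mem_filter.mpr ⟨hbA, this⟩)
  obtain ⟨a0, ha0A, ha0X⟩ := key2
  -- key3 : counting bad pairs
  have key3 : 2 * badP.card ≤ n * (n - 2) := by
    have hfst : ∀ p ∈ badP, p.1 ∈ Afin := by
      rintro ⟨a, b⟩ hp
      have := (Finset.mem_sdiff.mp hp).1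
      simp only [hallP, Finset.mem_filter, Finset.mem_univ, true_and, hPairOK] at this
      exact (hmemA a).mpr this.1
    have hfib := Finset.card_eq_sum_card_fiberwise hfst
    have hbound : ∀ a ∈ Afin, 2 * (badP.filter (fun p => p.1 = a)).card ≤ n - 2 := by
      intro a haf
      by_cases haX : a ∈ B tstar
      · have : badP.filter (fun p => p.1 = a) = ∅ := by
          rw [Finset.filter_eq_empty_iff]
          rintro p hp rfl
          exact (key1 p hp).1 haX
        rw [this]; simp
      · have hsub : badP.filter (fun p => p.1 = a) ⊆
            ((Afin.filter (fun b => Avoid Tr tstar (φ b) (φ a))).erase a).image (fun b => (a, b)) := by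
          rintro ⟨a', b⟩ hp
          simp only [Finset.mem_filter] at hp
          obtain ⟨hpbad, rfl⟩ := hp
          obtain ⟨_, _, hav⟩ := key1 _ hpbad
          have hok : PairOK (a', b) := by
            have := (Finset.mem_sdiff.mp hpbad).1
            simpa only [hallP, Finset.mem_filter, Finset.mem_univ, true_and] using this
          refine Finset.mem_image.mpr ⟨b, ?_, rfl⟩
          refine Finset.mem_erase.mpr ⟨hok.2.2.symm, ?_⟩
          refine Finset.mem_filter.mpr ⟨(hmemA b).mpr hok.2.1, ?_⟩
          · obtain ⟨w, hw⟩ := hav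
            exact ⟨w.reverse, by simpa using hw⟩
        have h1 := Finset.card_le_card hsub
        have h2 := Finset.card_image_le
          (s := (Afin.filter (fun b => Avoid Tr tstar (φ b) (φ a))).erase a) (f := fun b => (a, b))
        have h3 : a ∈ Afin.filter (fun b => Avoid Tr tstar (φ b) (φ a)) := by
          refine Finset.mem_filter.mpr ⟨haf, Avoid.refl' ?_⟩
          intro h
          exact haX (h ▸ hφ a)
        have h4 := Finset.card_erase_of_mem h3
        have h5 := hcent (φ a)
        omega
    calc 2 * badP.card = ∑ a ∈ Afin, 2 * (badP.filter (fun p => p.1 = a)).card := by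
          rw [hfib, Finset.mul_sum]
      _ ≤ ∑ _a ∈ Afin, (n - 2) := Finset.sum_le_sum hbound
      _ = n * (n - 2) := by rw [Finset.sum_const, smul_eq_mul]
  -- key4 : number of all pairs
  have key4 : allP.card = n * n - n := by
    have : allP = Afin.offDiag := by
      ext ⟨a, b⟩
      simp [hallP, hPairOK, Finset.mem_offDiag, hmemA]
    rw [this, Finset.offDiag_card]
  -- key5 : good pairs are at least half
  have hgsub : goodP ⊆ allP := by
    intro p hp
    simp only [hgoodP, hallP, Finset.mem_filter, Finset.mem_univ, true_and] at hp ⊢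
    exact hp.1
  have hcards : badP.card + goodP.card = allP.card := by
    rw [hbadP]
    exact Finset.card_sdiff_add_card_eq_card hgsub
  have key5 : n * n ≤ 2 * goodP.card := by
    have hmul : n * (n - 2) + 2 * n = n * n := by
      have : n - 2 + 2 = n := by omega
      calc n * (n - 2) + 2 * n = n * ((n - 2) + 2) := by ring
        _ = n * n := by rw [this]
    omega
  -- the ball around a0 and the pigeonhole
  set Xfin : Finset V := Finset.univ.filter (fun v => v ∈ B tstar) with hXfin
  have hXsub : Xfin ⊆ Finset.univ.filter (fun v => G.dist a0 v ≤ k) := by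
    intro x hx
    simp only [hXfin, Finset.mem_filter, Finset.mem_univ, true_and] at hx ⊢
    have he := hlen tstar a0 ha0X x hx
    rw [edist_cast (hG a0 x)] at he
    exact_mod_cast he
  have hΔ' : ∀ v : V, (Finset.univ.filter (fun u => G.Adj v u)).card ≤ Δ := by
    intro v
    have := hΔ v
    rwa [SimpleGraph.degree, SimpleGraph.neighborFinset_eq_filter] at this
  have hXcard : Xfin.card ≤ Δ ^ k + 1 :=
    le_trans (Finset.card_le_card hXsub) (ball_card_le hG hΔ')
  have hXne : Xfin.Nonempty := ⟨a0, by simp [hXfin, ha0X]⟩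
  set Nf : V → ℕ := fun x => (Finset.univ.filter (fun p : V × V => PairOK p ∧ Btw x p)).card
    with hNf
  obtain ⟨x0, hx0X, hx0max⟩ := Finset.exists_max_image Xfin Nf hXne
  have hx0mem : x0 ∈ B tstar := by
    simpa [hXfin] using hx0X
  have hcover : goodP ⊆ Xfin.biUnion
      (fun x => Finset.univ.filter (fun p : V × V => PairOK p ∧ Btw x p)) := by
    intro p hp
    simp only [hgoodP, Finset.mem_filter, Finset.mem_univ, true_and] at hp
    obtain ⟨hok, x, hxX, hxb⟩ := hp
    refine Finset.mem_biUnion.mpr ⟨x, by simp [hXfin, hxX], ?_⟩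
    simp only [Finset.mem_filter, Finset.mem_univ, true_and]
    exact ⟨hok, hxb⟩
  have hpig : goodP.card ≤ Xfin.card * Nf x0 := by
    refine le_trans (Finset.card_le_card hcover) (le_trans Finset.card_biUnion_le ?_)
    refine le_trans (Finset.sum_le_card_nsmul _ _ (Nf x0) ?_) (by simp [smul_eq_mul])
    intro x hx
    exact hx0max x hx
  -- final chain in ℕ
  have hchain : n * n ≤ 2 * (Δ ^ k + 1) * Nf x0 := by
    calc n * n ≤ 2 * goodP.card := key5
      _ ≤ 2 * (Xfin.card * Nf x0) := by omega
      _ ≤ 2 * ((Δ ^ k + 1) * Nf x0) := by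
          have := Nat.mul_le_mul_right (Nf x0) hXcard
          omega
      _ = 2 * (Δ ^ k + 1) * Nf x0 := by ring
  refine ⟨x0, ⟨a0, ha0A, hlen tstar x0 hx0mem a0 ha0X⟩, ?_⟩
  -- identify btw with the finset counts
  have hnum : ({p : V × V | p.1 ∈ A ∧ p.2 ∈ A ∧ p.1 ≠ p.2 ∧
      G.edist p.1 x0 + G.edist x0 p.2 = G.edist p.1 p.2}.ncard)
      = Nf x0 := by
    have : {p : V × V | p.1 ∈ A ∧ p.2 ∈ A ∧ p.1 ≠ p.2 ∧
        G.edist p.1 x0 + G.edist x0 p.2 = G.edist p.1 p.2}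
        = (↑(Finset.univ.filter (fun p : V × V => PairOK p ∧ Btw x0 p)) : Set (V × V)) := by
      ext p
      simp [hPairOK, hBtw, and_assoc]
    rw [this, Set.ncard_coe_finset]
  have hden : ({p : V × V | p.1 ∈ A ∧ p.2 ∈ A ∧ p.1 ≠ p.2}.ncard) = n * n - n := by
    have : {p : V × V | p.1 ∈ A ∧ p.2 ∈ A ∧ p.1 ≠ p.2} = (↑allP : Set (V × V)) := by
      ext p
      simp [hallP, hPairOK]
    rw [this, Set.ncard_coe_finset, key4]
  rw [ge_iff_le, _root_.btw, hnum, hden]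
  have h2n : 2 * n ≤ n * n := Nat.mul_le_mul_right n hn2
  have hDpos : 0 < n * n - n := by omega
  have hc1 : (0:ℝ) < 2 * ((Δ:ℝ) ^ k + 1) := by positivity
  have hc2 : (0:ℝ) < ((n * n - n : ℕ) : ℝ) := by exact_mod_cast hDpos
  rw [div_le_div_iff₀ hc1 hc2]
  have hle1 : ((n * n - n : ℕ) : ℝ) ≤ ((n * n : ℕ) : ℝ) := by
    exact_mod_cast Nat.sub_le _ _
  have hle2 : ((n * n : ℕ) : ℝ) ≤ (2 * (Δ ^ k + 1) * Nf x0 : ℕ) := by exact_mod_cast hchain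
  calc (1:ℝ) * ((n * n - n : ℕ) : ℝ) = ((n * n - n : ℕ) : ℝ) := by ring
    _ ≤ ((2 * (Δ ^ k + 1) * Nf x0 : ℕ) : ℝ) := le_trans hle1 hle2
    _ = (Nf x0 : ℝ) * (2 * ((Δ:ℝ) ^ k + 1)) := by push_cast; ring
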